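/- Consider the ODE on ℝ³ given by ẋ = −x p, θ̇ = p, ṗ = x²p²/(1 + x²) (the light Chaplygin sleigh on a cylinder, with θ the angle coordinate unrolled to ℝ). For every θ₀ ∈ ℝ, the equilibrium (0, θ₀, 0) is Lyapunov unstable: there exists ε > 0 such that for every δ > 0 there is a differentiable curve γ : [0,∞) → ℝ³ solving the ODE with ‖γ(0) − (0,θ₀,0)‖ < δ and ‖γ(t) − (0,θ₀,0)‖ ≥ ε for some t ≥ 0. -/

import Mathlib

/-- Lyapunov instability of the equilibria `(0, θ₀, 0)` of the ODE on `ℝ³`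
`ẋ = −xp, θ̇ = p, ṗ = x²p²/(1+x²)` (the light Chaplygin sleigh on a cylinder,
with the angle coordinate `θ` unrolled to `ℝ`; coordinates ordered `(x, θ, p)`). -/
theorem stmt_10 (θ₀ : ℝ) :
    ∃ ε > 0, ∀ δ > 0, ∃ γ : ℝ → ℝ × ℝ × ℝ,
      (∀ t ∈ Set.Ici (0 : ℝ), HasDerivWithinAt γ
        (-(γ t).1 * (γ t).2.2, (γ t).2.2,
          (γ t).1 ^ 2 * (γ t).2.2 ^ 2 / (1 + (γ t).1 ^ 2)) (Set.Ici 0) t) ∧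
      ‖γ 0 - ((0 : ℝ), θ₀, (0 : ℝ))‖ < δ ∧
      ∃ t ≥ (0 : ℝ), ε ≤ ‖γ t - ((0 : ℝ), θ₀, (0 : ℝ))‖ := by
  refine ⟨1, one_pos, fun δ hδ => ?_⟩
  set c : ℝ := δ / 2 with hc
  have hcpos : 0 < c := by positivity
  refine ⟨fun t => (0, θ₀ + c * t, c), ?_, ?_, ?_⟩
  · intro t ht
    simp only [neg_zero, zero_mul, ne_eq, zero_pow, mul_zero, zero_div]
    refine HasDerivWithinAt.prodMk ?_ (HasDerivWithinAt.prodMk ?_ ?_)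
    · simpa using (hasDerivWithinAt_const t (Set.Ici (0:ℝ)) (0:ℝ))
    · simpa using ((hasDerivWithinAt_id t (Set.Ici (0:ℝ))).const_mul c).const_add θ₀
    · simpa using (hasDerivWithinAt_const t (Set.Ici (0:ℝ)) c)
  · have : ‖((0:ℝ), θ₀ + c * 0, c) - ((0:ℝ), θ₀, (0:ℝ))‖ = c := by
      simp [Prod.norm_def, abs_of_pos hcpos, hcpos.le]
    rw [this]
    simpa [hc] using half_lt_self hδ
  · refine ⟨1 / c, by positivity, ?_⟩
    have h1 : ((0:ℝ), θ₀ + c * (1 / c), c) - ((0:ℝ), θ₀, (0:ℝ)) = (0, 1, c) := by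
      field_simp
      simp
    rw [h1]
    simp [Prod.norm_def, le_max_iff, abs_of_pos hcpos]
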